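/- For any density matrices ρ₀, ρ₁, σ on a finite-dimensional Hilbert space, (1/2)(F(σ,ρ₀) + F(σ,ρ₁)) ≤ (1/2)(1 + √F(ρ₀,ρ₁)). -/

import Mathlib

open Matrix
open scoped ComplexOrder

open Classical in
/-- Square root of a positive semidefinite matrix (junk value `0` otherwise). -/
noncomputable def msqrt {n : Type*} [Fintype n] [DecidableEq n] (A : Matrix n n ℂ) :
    Matrix n n ℂ :=
  if h : A.PosSemidef then
    h.1.eigenvectorUnitary.1 * diagonal ((↑) ∘ (√·) ∘ h.1.eigenvalues) *
      (star h.1.eigenvectorUnitary : Matrix n n ℂ)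
  else 0

/-- Fidelity `F(ρ,σ) = (tr √(√ρ σ √ρ))²`. -/
noncomputable def fid {n : Type*} [Fintype n] [DecidableEq n] (ρ σ : Matrix n n ℂ) : ℝ :=
  ((msqrt (msqrt ρ * σ * msqrt ρ)).trace).re ^ 2

namespace Matrix

variable {n : Type*} [Fintype n] [DecidableEq n]

/-- Square root of a positive semidefinite matrix via the spectral theorem. -/
noncomputable def PosSemidef.sqrt {A : Matrix n n ℂ} (h : A.PosSemidef) : Matrix n n ℂ :=
  h.1.eigenvectorUnitary.1 * diagonal ((↑) ∘ (√·) ∘ h.1.eigenvalues) *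
    (star h.1.eigenvectorUnitary : Matrix n n ℂ)

open MatrixOrder in
lemma PosSemidef.sqrt_eq_cfc {A : Matrix n n ℂ} (h : A.PosSemidef) : h.sqrt = CFC.sqrt A := by
  rw [CFC.sqrt_eq_cfc, cfc_nnreal_eq_real _ A h.nonneg, h.1.cfc_eq]
  simp only [IsHermitian.cfc, Unitary.conjStarAlgAut_apply, PosSemidef.sqrt, Real.coe_sqrt,
    Real.coe_toNNReal']
  congr 3
  funext i
  simp [max_eq_left (h.eigenvalues_nonneg i)]

open MatrixOrder in
lemma PosSemidef.posSemidef_sqrt {A : Matrix n n ℂ} (h : A.PosSemidef) : h.sqrt.PosSemidef := by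
  rw [h.sqrt_eq_cfc]; exact (CFC.sqrt_nonneg A).posSemidef

open MatrixOrder in
lemma PosSemidef.sqrt_mul_self {A : Matrix n n ℂ} (h : A.PosSemidef) : h.sqrt * h.sqrt = A := by
  rw [h.sqrt_eq_cfc]; exact CFC.sqrt_mul_sqrt_self A h.nonneg

open MatrixOrder in
lemma PosSemidef.eq_sqrt_of_sq_eq {A : Matrix n n ℂ} (hA : A.PosSemidef) (B : Matrix n n ℂ)
    {hB : B.PosSemidef} (hAB : A ^ 2 = B) : A = hB.sqrt := by
  rw [hB.sqrt_eq_cfc]; exact (CFC.sqrt_unique (by rw [← pow_two, hAB]) hA.nonneg).symm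

lemma IsHermitian.star_mul_self_mul_eq_diagonal {A : Matrix n n ℂ} (hA : A.IsHermitian) :
    star (hA.eigenvectorUnitary : Matrix n n ℂ) * A * (hA.eigenvectorUnitary : Matrix n n ℂ)
      = diagonal (Complex.ofReal ∘ hA.eigenvalues) := by
  have h := hA.spectral_theorem
  rw [Unitary.conjStarAlgAut_apply] at h
  calc star (hA.eigenvectorUnitary : Matrix n n ℂ) * A * (hA.eigenvectorUnitary : Matrix n n ℂ)
      = star (hA.eigenvectorUnitary : Matrix n n ℂ) * ((hA.eigenvectorUnitary : Matrix n n ℂ) *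
        diagonal (RCLike.ofReal ∘ hA.eigenvalues) * star (hA.eigenvectorUnitary : Matrix n n ℂ)) *
        (hA.eigenvectorUnitary : Matrix n n ℂ) := by rw [← h]
    _ = _ := by
      simp only [← Matrix.mul_assoc, Unitary.coe_star_mul_self, Matrix.one_mul]
      simp only [Matrix.mul_assoc, Unitary.coe_star_mul_self, Matrix.mul_one]
      rfl

end Matrix

open scoped InnerProductSpace

section Helpers

variable {n : Type*} [Fintype n] [DecidableEq n]

/-- Hilbert–Schmidt embedding of matrices. -/
noncomputable def toE (A : Matrix n n ℂ) : EuclideanSpace ℂ (n × n) :=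
  (WithLp.equiv 2 ((n × n) → ℂ)).symm fun p => A p.1 p.2

lemma inner_toE (A B : Matrix n n ℂ) : ⟪toE A, toE B⟫_ℂ = (Aᴴ * B).trace := by
  simp only [toE, PiLp.inner_apply, RCLike.inner_apply, WithLp.equiv_symm_apply, PiLp.toLp_apply,
    Matrix.trace, Matrix.diag, Matrix.mul_apply, Matrix.conjTranspose_apply]
  rw [Fintype.sum_prod_type]
  rw [Finset.sum_comm]
  exact Finset.sum_congr rfl fun _ _ => Finset.sum_congr rfl fun _ _ => by
    rw [starRingEnd_apply, mul_comm]

lemma norm_toE_sq (A : Matrix n n ℂ) : ‖toE A‖ ^ 2 = ((Aᴴ * A).trace).re := by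
  rw [← inner_self_eq_norm_sq (𝕜 := ℂ), inner_toE]
  rfl

/-- Column of a matrix as a Euclidean vector. -/
noncomputable def colE (M : Matrix n n ℂ) (i : n) : EuclideanSpace ℂ n :=
  (WithLp.equiv 2 (n → ℂ)).symm fun k => M k i

lemma inner_colE (M M' : Matrix n n ℂ) (i j : n) :
    ⟪colE M i, colE M' j⟫_ℂ = (Mᴴ * M') i j := by
  simp only [colE, PiLp.inner_apply, RCLike.inner_apply, WithLp.equiv_symm_apply, PiLp.toLp_apply,
    Matrix.mul_apply, Matrix.conjTranspose_apply]
  exact Finset.sum_congr rfl fun x _ => by rw [starRingEnd_apply, mul_comm]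

lemma three_vec {E : Type*} [NormedAddCommGroup E] [InnerProductSpace ℂ E]
    {ψ φ₀ φ₁ : E} (hψ : ‖ψ‖ = 1) (h0 : ‖φ₀‖ = 1) (h1 : ‖φ₁‖ = 1) :
    ‖⟪ψ, φ₀⟫_ℂ‖ ^ 2 + ‖⟪ψ, φ₁⟫_ℂ‖ ^ 2 ≤ 1 + ‖⟪φ₀, φ₁⟫_ℂ‖ := by
  set a := ⟪ψ, φ₀⟫_ℂ with ha
  set b := ⟪ψ, φ₁⟫_ℂ with hb
  set g := ⟪φ₀, φ₁⟫_ℂ with hg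
  set S : ℝ := ‖a‖ ^ 2 + ‖b‖ ^ 2 with hS
  have hS0 : 0 ≤ S := by positivity
  have hg0 : (0:ℝ) ≤ ‖g‖ := norm_nonneg _
  set v : E := (starRingEnd ℂ a) • φ₀ + (starRingEnd ℂ b) • φ₁ with hv
  have hinner : ⟪ψ, v⟫_ℂ = (S : ℂ) := by
    rw [hv, inner_add_right, inner_smul_right, inner_smul_right, ← ha, ← hb]
    rw [mul_comm, mul_comm ((starRingEnd ℂ) b)]
    rw [RCLike.mul_conj, RCLike.mul_conj]
    push_cast [hS]
    norm_cast
  have hSv : S ≤ ‖v‖ := by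
    have h1' : ‖⟪ψ, v⟫_ℂ‖ ≤ ‖ψ‖ * ‖v‖ := norm_inner_le_norm _ _
    rw [hinner, hψ, one_mul] at h1'
    calc S = ‖(S:ℂ)‖ := by simp [abs_of_nonneg hS0]
    _ ≤ ‖v‖ := h1'
  have hvsq : ‖v‖ ^ 2 ≤ S * (1 + ‖g‖) := by
    have e1 : ‖(starRingEnd ℂ) a • φ₀‖ = ‖a‖ := by simp [norm_smul, h0]
    have e2 : ‖(starRingEnd ℂ) b • φ₁‖ = ‖b‖ := by simp [norm_smul, h1]
    have e3 : ⟪(starRingEnd ℂ) a • φ₀, (starRingEnd ℂ) b • φ₁⟫_ℂ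
        = a * (starRingEnd ℂ) b * g := by
      rw [inner_smul_left, inner_smul_right, ← hg, Complex.conj_conj]
      ring
    have hns := norm_add_sq (𝕜 := ℂ) ((starRingEnd ℂ) a • φ₀) ((starRingEnd ℂ) b • φ₁)
    rw [e1, e2, e3, ← hv] at hns
    have hbound : RCLike.re (a * (starRingEnd ℂ) b * g) ≤ ‖a‖ * ‖b‖ * ‖g‖ := by
      calc RCLike.re (a * (starRingEnd ℂ) b * g) ≤ ‖a * (starRingEnd ℂ) b * g‖ := by
            simpa [RCLike.re_to_complex] using Complex.re_le_norm (a * (starRingEnd ℂ) b * g)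
      _ = ‖a‖ * ‖b‖ * ‖g‖ := by simp [norm_mul]
    have hamgm : 2 * (‖a‖ * ‖b‖) ≤ S := by nlinarith [sq_nonneg (‖a‖ - ‖b‖)]
    rw [hns, hS]
    nlinarith
  nlinarith [norm_nonneg v]

lemma polar_right (M : Matrix n n ℂ) :
    ∃ V : Matrix n n ℂ, Vᴴ * V = 1 ∧
      M = V * (posSemidef_conjTranspose_mul_self M).sqrt := by
  set hH := posSemidef_conjTranspose_mul_self M with hHdef
  set W : Matrix n n ℂ := (hH.1.eigenvectorUnitary : Matrix n n ℂ) with hWdef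
  have hW1 : star W * W = 1 := Matrix.mem_unitaryGroup_iff'.mp hH.1.eigenvectorUnitary.2
  have hW2 : W * star W = 1 := Matrix.mem_unitaryGroup_iff.mp hH.1.eigenvectorUnitary.2
  set d : n → ℝ := hH.1.eigenvalues with hddef
  have hd : ∀ i, 0 ≤ d i := hH.eigenvalues_nonneg
  have hkey : (M * W)ᴴ * (M * W) = diagonal ((↑) ∘ d) := by
    rw [conjTranspose_mul]
    calc Wᴴ * Mᴴ * (M * W) = star W * (Mᴴ * M) * W := by
          rw [Matrix.star_eq_conjTranspose]
          simp only [Matrix.mul_assoc]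
    _ = diagonal ((↑) ∘ d) := hH.1.star_mul_self_mul_eq_diagonal
  set u : n → EuclideanSpace ℂ n := fun i => colE (M * W) i with hudef
  have hu : ∀ i j, ⟪u i, u j⟫_ℂ = diagonal ((↑) ∘ d) i j := by
    intro i j
    rw [hudef, inner_colE, hkey]
  set v : n → EuclideanSpace ℂ n :=
    fun i => (((Real.sqrt (d i) : ℝ) : ℂ))⁻¹ • u i with hvdef
  have honb : Orthonormal ℂ (Set.restrict {i | d i ≠ 0} v) := by
    rw [orthonormal_iff_ite]
    rintro ⟨i, hi⟩ ⟨j, hj⟩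
    simp only [Set.restrict_apply, Set.restrict, hvdef, inner_smul_left, inner_smul_right, hu]
    rcases eq_or_ne i j with rfl | hij
    · simp only [diagonal_apply_eq, Subtype.mk.injEq, if_pos rfl, Function.comp_apply]
      have hdi : 0 < d i := lt_of_le_of_ne (hd i) (Ne.symm hi)
      have h2 : (Real.sqrt (d i) : ℂ) * (Real.sqrt (d i) : ℂ) = ((d i : ℝ) : ℂ) := by
        rw [← Complex.ofReal_mul, Real.mul_self_sqrt (hd i)]
      have hdc : ((d i : ℝ) : ℂ) ≠ 0 := Complex.ofReal_ne_zero.mpr hi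
      rw [map_inv₀, Complex.conj_ofReal, ← mul_assoc, ← mul_inv, h2, inv_mul_cancel₀ hdc]
      simp
    · have : (⟨i, hi⟩ : {i | d i ≠ 0}) ≠ ⟨j, hj⟩ := by simpa [Subtype.ext_iff] using hij
      rw [if_neg this, diagonal_apply_ne _ hij]
      ring
  obtain ⟨b, hb⟩ := honb.exists_orthonormalBasis_extension_of_card_eq
    (by simp [finrank_euclideanSpace])
  set B : Matrix n n ℂ := Matrix.of fun k i => b i k with hBdef
  have hcolB : ∀ i, colE B i = b i := fun i => rfl
  have hB : Bᴴ * B = 1 := by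
    ext i j
    rw [← inner_colE, hcolB, hcolB, orthonormal_iff_ite.mp b.orthonormal i j, Matrix.one_apply]
  have hBD : B * diagonal ((↑) ∘ Real.sqrt ∘ d) = M * W := by
    ext j i
    rw [mul_diagonal]
    by_cases hdi : d i = 0
    · have hui : u i = 0 := by
        rw [← inner_self_eq_zero (𝕜 := ℂ)]
        rw [hu i i]
        simp [hdi]
      have : (M * W) j i = u i j := rfl
      rw [this, hui]
      simp [hdi]
    · have hbi : b i = v i := hb i hdi
      have hBji : B j i = v i j := by rw [hBdef]; exact congrArg (fun x : EuclideanSpace ℂ n => x j) hbi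
      have hsd : (Real.sqrt (d i) : ℂ) ≠ 0 := by
        simp only [ne_eq, Complex.ofReal_eq_zero]
        exact (Real.sqrt_pos.mpr (lt_of_le_of_ne (hd i) (Ne.symm hdi))).ne'
      have hvi : v i j = ((Real.sqrt (d i) : ℂ))⁻¹ * u i j := rfl
      rw [hBji, hvi]
      have : (M * W) j i = u i j := rfl
      rw [this]
      field_simp
      rw [Function.comp_apply, Function.comp_apply, mul_comm]
  refine ⟨B * star W, ?_, ?_⟩
  · rw [conjTranspose_mul, Matrix.star_eq_conjTranspose, conjTranspose_conjTranspose]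
    calc W * Bᴴ * (B * Wᴴ) = W * (Bᴴ * B) * Wᴴ := by
          simp only [Matrix.mul_assoc]
    _ = 1 := by rw [hB, Matrix.mul_one, ← Matrix.star_eq_conjTranspose, hW2]
  · have hsqrt : hH.sqrt = W * diagonal ((↑) ∘ Real.sqrt ∘ d) * star W := rfl
    rw [hsqrt]
    calc M = M * W * star W := by rw [Matrix.mul_assoc, hW2, Matrix.mul_one]
    _ = B * diagonal ((↑) ∘ Real.sqrt ∘ d) * star W := by rw [hBD]
    _ = B * star W * (W * diagonal ((↑) ∘ Real.sqrt ∘ d) * star W) := by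
        have h : B * star W * (W * diagonal ((↑) ∘ Real.sqrt ∘ d) * star W)
            = B * (star W * W) * (diagonal ((↑) ∘ Real.sqrt ∘ d) * star W) := by
          simp only [Matrix.mul_assoc]
        rw [h, hW1, Matrix.mul_one, ← Matrix.mul_assoc]

lemma polar_left (M : Matrix n n ℂ) {P : Matrix n n ℂ} (hP : P.PosSemidef)
    (hPM : P * P = M * Mᴴ) :
    ∃ V : Matrix n n ℂ, V * Vᴴ = 1 ∧ Vᴴ * V = 1 ∧ M = P * V := by
  obtain ⟨V, hV1, hVM⟩ := polar_right Mᴴ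
  have hQP : P = (posSemidef_conjTranspose_mul_self Mᴴ).sqrt := by
    refine hP.eq_sqrt_of_sq_eq _ ?_
    rw [pow_two, hPM, conjTranspose_conjTranspose]
  refine ⟨Vᴴ, by rw [conjTranspose_conjTranspose]; exact hV1, ?_, ?_⟩
  · rw [conjTranspose_conjTranspose]
    exact mul_eq_one_comm.mp hV1
  · have : M = (V * (posSemidef_conjTranspose_mul_self Mᴴ).sqrt)ᴴ := by
      rw [← hVM, conjTranspose_conjTranspose]
    rw [this, conjTranspose_mul, ← hQP, hP.1.eq]

lemma psd_diag_nonneg {P : Matrix n n ℂ} (hP : P.PosSemidef) (i : n) : 0 ≤ P i i := by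
  exact hP.diag_nonneg

lemma psd_trace_eq {P : Matrix n n ℂ} (hP : P.PosSemidef) :
    P.trace = ((P.trace.re : ℝ) : ℂ) ∧ 0 ≤ P.trace.re := by
  have h : ∀ i, 0 ≤ (P i i).re ∧ (P i i).im = 0 := by
    intro i
    have := psd_diag_nonneg hP i
    rw [Complex.le_def] at this
    simpa using ⟨this.1, this.2.symm⟩
  have hre : 0 ≤ P.trace.re := by
    rw [Matrix.trace, Complex.re_sum]
    exact Finset.sum_nonneg fun i _ => (h i).1
  have him : P.trace.im = 0 := by
    rw [Matrix.trace, Complex.im_sum]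
    exact Finset.sum_eq_zero fun i _ => (h i).2
  exact ⟨Complex.ext (by simp) (by simp [him]), hre⟩

lemma trace_dual {N U Q : Matrix n n ℂ} (hU1 : U * Uᴴ = 1)
    (hQ : Q.PosSemidef) (hQN : Q * Q = N * Nᴴ) :
    ‖(N * U).trace‖ ≤ Q.trace.re := by
  obtain ⟨V, hV1, hV2, hNV⟩ := polar_left N hQ hQN
  set Q' := hQ.sqrt with hQ'def
  have hQ'h : Q'ᴴ = Q' := hQ.posSemidef_sqrt.1.eq
  have hQ'2 : Q' * Q' = Q := hQ.sqrt_mul_self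
  have e1 : (N * U).trace = (Q'ᴴ * (Q' * V * U)).trace := by
    rw [hQ'h, hNV]
    congr 1
    rw [← hQ'2]
    simp only [Matrix.mul_assoc]
  have e2 : (Q'ᴴ * (Q' * V * U)).trace = ⟪toE Q', toE (Q' * V * U)⟫_ℂ := (inner_toE _ _).symm
  have hx : ‖toE Q'‖ ^ 2 = Q.trace.re := by
    rw [norm_toE_sq, hQ'h, hQ'2]
  have hy : ‖toE (Q' * V * U)‖ ^ 2 = Q.trace.re := by
    rw [norm_toE_sq]
    have : (Q' * V * U)ᴴ * (Q' * V * U) = Uᴴ * Vᴴ * Q * (V * U) := by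
      rw [conjTranspose_mul, conjTranspose_mul, hQ'h, ← hQ'2]
      simp only [Matrix.mul_assoc]
    rw [this]
    have hassoc : Uᴴ * Vᴴ * Q * (V * U) = (Uᴴ * Vᴴ) * (Q * (V * U)) := by
      simp only [Matrix.mul_assoc]
    rw [hassoc, Matrix.trace_mul_comm]
    have hcancel : Q * (V * U) * (Uᴴ * Vᴴ) = Q := by
      calc Q * (V * U) * (Uᴴ * Vᴴ) = Q * (V * (U * Uᴴ) * Vᴴ) := by
            simp only [Matrix.mul_assoc]
      _ = Q := by rw [hU1, Matrix.mul_one, hV1, Matrix.mul_one]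
    rw [hcancel]
  have hxy : ‖toE Q'‖ = ‖toE (Q' * V * U)‖ := by
    have := hx.trans hy.symm
    nlinarith [norm_nonneg (toE Q'), norm_nonneg (toE (Q' * V * U))]
  calc ‖(N * U).trace‖ = ‖⟪toE Q', toE (Q' * V * U)⟫_ℂ‖ := by rw [e1, e2]
  _ ≤ ‖toE Q'‖ * ‖toE (Q' * V * U)‖ := norm_inner_le_norm _ _
  _ = Q.trace.re := by rw [← hxy, ← pow_two, hx]

lemma conj_form {ρ σ : Matrix n n ℂ} (hρ : ρ.PosSemidef) (hσ : σ.PosSemidef) :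
    msqrt σ * ρ * msqrt σ
      = (hσ.sqrt * hρ.sqrt) * (hσ.sqrt * hρ.sqrt)ᴴ := by
  rw [msqrt, dif_pos hσ, conjTranspose_mul, hρ.posSemidef_sqrt.1.eq, hσ.posSemidef_sqrt.1.eq]
  calc hσ.sqrt * ρ * hσ.sqrt = hσ.sqrt * (hρ.sqrt * hρ.sqrt) * hσ.sqrt := by
        rw [hρ.sqrt_mul_self]
  _ = hσ.sqrt * hρ.sqrt * (hρ.sqrt * hσ.sqrt) := by simp only [Matrix.mul_assoc]

lemma fid_formula {ρ σ : Matrix n n ℂ} (hρ : ρ.PosSemidef) (hσ : σ.PosSemidef) :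
    fid σ ρ
      = (((posSemidef_self_mul_conjTranspose (hσ.sqrt * hρ.sqrt)).sqrt).trace).re ^ 2 := by
  rw [fid, conj_form hρ hσ, msqrt, dif_pos (posSemidef_self_mul_conjTranspose _)]
  rfl

lemma core (A R0 R1 : Matrix n n ℂ) (hAh : Aᴴ = A) (hR0h : R0ᴴ = R0) (hR1h : R1ᴴ = R1)
    (hAt : ((A * A).trace) = 1) (h0t : ((R0 * R0).trace) = 1)
    (h1t : ((R1 * R1).trace) = 1) :
    (1 / 2) * (((posSemidef_self_mul_conjTranspose (A * R0)).sqrt.trace).re ^ 2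
      + ((posSemidef_self_mul_conjTranspose (A * R1)).sqrt.trace).re ^ 2)
      ≤ (1 / 2) * (1 + ((posSemidef_self_mul_conjTranspose (R0 * R1)).sqrt.trace).re) := by
  set M0 := A * R0 with hM0def
  set M1 := A * R1 with hM1def
  set N := R0 * R1 with hNdef
  set P0 := (posSemidef_self_mul_conjTranspose M0).sqrt with hP0def
  set P1 := (posSemidef_self_mul_conjTranspose M1).sqrt with hP1def
  set Q := (posSemidef_self_mul_conjTranspose N).sqrt with hQdef
  have hP0 := (posSemidef_self_mul_conjTranspose M0).posSemidef_sqrt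
  have hP1 := (posSemidef_self_mul_conjTranspose M1).posSemidef_sqrt
  have hQp := (posSemidef_self_mul_conjTranspose N).posSemidef_sqrt
  set t0 := P0.trace.re with ht0def
  set t1 := P1.trace.re with ht1def
  set c := Q.trace.re with hcdef
  have ht0 : 0 ≤ t0 := (psd_trace_eq hP0).2
  have ht1 : 0 ≤ t1 := (psd_trace_eq hP1).2
  have hc : 0 ≤ c := (psd_trace_eq hQp).2
  -- polar decompositions
  obtain ⟨U0, hU0a, hU0b, hM0p⟩ := polar_left M0 hP0
    (posSemidef_self_mul_conjTranspose M0).sqrt_mul_self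
  obtain ⟨U1, hU1a, hU1b, hM1p⟩ := polar_left M1 hP1
    (posSemidef_self_mul_conjTranspose M1).sqrt_mul_self
  set ψ := toE A with hψdef
  set φ0 := toE (R0 * U0ᴴ) with hφ0def
  set φ1 := toE (R1 * U1ᴴ) with hφ1def
  -- norms
  have hnψ : ‖ψ‖ = 1 := by
    have h2 : ‖ψ‖ ^ 2 = 1 := by
      rw [hψdef, norm_toE_sq, hAh, hAt]
      simp
    rw [← Real.sqrt_sq (norm_nonneg ψ), h2, Real.sqrt_one]
  have hnφ : ∀ (R U : Matrix n n ℂ), Rᴴ = R → ((R * R).trace) = 1 →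
      Uᴴ * U = 1 → ‖toE (R * Uᴴ)‖ = 1 := by
    intro R U hRh hρt hU
    have h2 : ‖toE (R * Uᴴ)‖ ^ 2 = 1 := by
      rw [norm_toE_sq]
      have e : (R * Uᴴ)ᴴ * (R * Uᴴ) = U * (R * R * Uᴴ) := by
        rw [conjTranspose_mul, conjTranspose_conjTranspose, hRh]
        simp only [Matrix.mul_assoc]
      rw [e, Matrix.trace_mul_comm, Matrix.mul_assoc, hU, Matrix.mul_one, hρt]
      simp
    rw [← Real.sqrt_sq (norm_nonneg _), h2, Real.sqrt_one]
  have hnφ0 : ‖φ0‖ = 1 := hnφ R0 U0 hR0h h0t hU0b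
  have hnφ1 : ‖φ1‖ = 1 := hnφ R1 U1 hR1h h1t hU1b
  -- inner products with ψ
  have hiner : ∀ (R U P : Matrix n n ℂ), A * R = P * U → U * Uᴴ = 1 →
      ⟪ψ, toE (R * Uᴴ)⟫_ℂ = P.trace := by
    intro R U P hP hU
    rw [hψdef, inner_toE, hAh]
    have : A * (R * Uᴴ) = P := by
      rw [← Matrix.mul_assoc, hP, Matrix.mul_assoc, hU, Matrix.mul_one]
    rw [this]
  have hi0 : ⟪ψ, φ0⟫_ℂ = P0.trace := hiner R0 U0 P0 hM0p hU0a
  have hi1 : ⟪ψ, φ1⟫_ℂ = P1.trace := hiner R1 U1 P1 hM1p hU1a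
  have hni0 : ‖⟪ψ, φ0⟫_ℂ‖ = t0 := by
    rw [hi0, (psd_trace_eq hP0).1, ← ht0def, Complex.norm_real, Real.norm_of_nonneg ht0]
  have hni1 : ‖⟪ψ, φ1⟫_ℂ‖ = t1 := by
    rw [hi1, (psd_trace_eq hP1).1, ← ht1def, Complex.norm_real, Real.norm_of_nonneg ht1]
  -- cross inner product
  have hcross : ⟪φ0, φ1⟫_ℂ = (N * (U1ᴴ * U0)).trace := by
    rw [hφ0def, hφ1def, inner_toE]
    have e : (R0 * U0ᴴ)ᴴ * (R1 * U1ᴴ) = U0 * (N * U1ᴴ) := by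
      rw [conjTranspose_mul, conjTranspose_conjTranspose, hR0h, hNdef]
      simp only [Matrix.mul_assoc]
    rw [e, Matrix.trace_mul_comm]
    simp only [Matrix.mul_assoc]
  have hUU : (U1ᴴ * U0) * (U1ᴴ * U0)ᴴ = 1 := by
    rw [conjTranspose_mul, conjTranspose_conjTranspose]
    calc U1ᴴ * U0 * (U0ᴴ * U1) = U1ᴴ * (U0 * U0ᴴ) * U1 := by simp only [Matrix.mul_assoc]
    _ = 1 := by rw [hU0a, Matrix.mul_one, hU1b]
  have hgc : ‖⟪φ0, φ1⟫_ℂ‖ ≤ c := by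
    rw [hcross]
    exact trace_dual hUU (posSemidef_self_mul_conjTranspose N).posSemidef_sqrt
      (posSemidef_self_mul_conjTranspose N).sqrt_mul_self
  have hkey := three_vec hnψ hnφ0 hnφ1
  rw [hni0, hni1] at hkey
  linarith

end Helpers

theorem avg_fidelity_le {n : Type*} [Fintype n] [DecidableEq n]
    (ρ₀ ρ₁ σ : Matrix n n ℂ)
    (h₀ : ρ₀.PosSemidef) (h₀t : ρ₀.trace = 1)
    (h₁ : ρ₁.PosSemidef) (h₁t : ρ₁.trace = 1)
    (hσ : σ.PosSemidef) (hσt : σ.trace = 1) :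
    (1 / 2) * (fid σ ρ₀ + fid σ ρ₁) ≤ (1 / 2) * (1 + Real.sqrt (fid ρ₀ ρ₁)) := by
  have hc : 0 ≤ ((posSemidef_self_mul_conjTranspose (h₀.sqrt * h₁.sqrt)).sqrt.trace).re :=
    (psd_trace_eq (posSemidef_self_mul_conjTranspose (h₀.sqrt * h₁.sqrt)).posSemidef_sqrt).2
  rw [fid_formula h₀ hσ, fid_formula h₁ hσ, fid_formula h₁ h₀, Real.sqrt_sq hc]
  have hkey := core hσ.sqrt h₀.sqrt h₁.sqrt hσ.posSemidef_sqrt.1.eq h₀.posSemidef_sqrt.1.eq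
    h₁.posSemidef_sqrt.1.eq (by rw [hσ.sqrt_mul_self, hσt]) (by rw [h₀.sqrt_mul_self, h₀t])
    (by rw [h₁.sqrt_mul_self, h₁t])
  exact hkey
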